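/- Consider the scalar Cauchy problem u'(x) = N(x, u(x))·u(x) + φ(x) on [x0, ∞), u(x0) = u0, where N is continuous in x, locally Lipschitz in u, N(x,u) + u·∂N/∂u(x,u) < -α < 0 for all x, u, and |φ(x)| ≤ k for all x. Then the solution exists globally on [x0, ∞), is unique, and satisfies |u(x)| ≤ max(|u0|, k/α) for all x ≥ x0. -/

import Mathlib

open Set Metric Filter
open scoped NNReal Topology

lemma myLocLip_compact {X Y : Type*} [MetricSpace X] [MetricSpace Y] {f : X → Y}
    (hf : LocallyLipschitz f) {K : Set X} (hK : IsCompact K) :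
    ∃ L : ℝ, 0 ≤ L ∧ ∀ p ∈ K, ∀ q ∈ K, dist (f p) (f q) ≤ L * dist p q := by
  have hcont := hf.continuous
  choose C t ht hlip using hf
  choose r hr hball using fun p => Metric.mem_nhds_iff.1 (ht p)
  obtain ⟨s, hs⟩ := hK.elim_finite_subcover (fun p : X => ball p (r p))
    (fun p => isOpen_ball) (fun x hx => mem_iUnion.2 ⟨x, mem_ball_self (hr x)⟩)
  obtain ⟨δ, hδ, hleb⟩ := lebesgue_number_lemma_of_metric
    (c := fun i : {p : X // p ∈ s} => ball (i : X) (r i)) hK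
    (fun i => isOpen_ball) (by
      intro x hx
      obtain ⟨p, hp, hxp⟩ := mem_iUnion₂.1 (hs hx)
      exact mem_iUnion.2 ⟨⟨p, hp⟩, hxp⟩)
  obtain ⟨M0, hM0⟩ := Metric.isBounded_iff.1 (hK.image hcont).isBounded
  set M : ℝ := max M0 0 with hMdef
  have hMnn : 0 ≤ M := le_max_right _ _
  have hM : ∀ p ∈ K, ∀ q ∈ K, dist (f p) (f q) ≤ M :=
    fun p hp q hq => le_trans (hM0 (mem_image_of_mem f hp) (mem_image_of_mem f hq))
      (le_max_left _ _)
  obtain ⟨L0, hL0nn, hL0⟩ : ∃ L0 : ℝ, 0 ≤ L0 ∧ ∀ p ∈ s, (C p : ℝ) ≤ L0 := by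
    refine ⟨(s.sup C : ℝ≥0), (s.sup C).coe_nonneg, fun p hp => ?_⟩
    exact_mod_cast Finset.le_sup hp
  refine ⟨max L0 (M / δ), le_trans hL0nn (le_max_left _ _), fun p hp q hq => ?_⟩
  rcases lt_or_ge (dist p q) δ with h | h
  · obtain ⟨i, hi⟩ := hleb p hp
    have hpq : q ∈ ball p δ := by simpa [dist_comm] using h
    have hpi : p ∈ t i := hball _ (hi (mem_ball_self hδ))
    have hqi : q ∈ t i := hball _ (hi hpq)
    have h2 := (hlip (i : X)).dist_le_mul p hpi q hqi
    calc dist (f p) (f q) ≤ (C i : ℝ) * dist p q := h2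
      _ ≤ L0 * dist p q := mul_le_mul_of_nonneg_right (hL0 _ i.2) dist_nonneg
      _ ≤ max L0 (M / δ) * dist p q :=
          mul_le_mul_of_nonneg_right (le_max_left _ _) dist_nonneg
  · have h2 : M ≤ M / δ * dist p q := by
      rw [div_mul_eq_mul_div, le_div_iff₀ hδ]
      exact mul_le_mul_of_nonneg_left h hMnn
    calc dist (f p) (f q) ≤ M := hM p hp q hq
      _ ≤ M / δ * dist p q := h2
      _ ≤ max L0 (M / δ) * dist p q :=
          mul_le_mul_of_nonneg_right (le_max_right _ _) dist_nonneg

lemma aux_upper {a b μ : ℝ} {f d : ℝ → ℝ} (hfa : f a ≤ μ)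
    (hf : ∀ x ∈ Icc a b, HasDerivWithinAt f (d x) (Icc a b) x)
    (hd : ∀ x ∈ Icc a b, μ ≤ f x → d x ≤ 0) :
    ∀ x ∈ Icc a b, f x ≤ μ := by
  by_contra hcon
  push_neg at hcon
  obtain ⟨x1, hx1, hgt⟩ := hcon
  have hcontf : ContinuousOn f (Icc a b) := fun y hy => (hf y hy).continuousWithinAt
  set T := Icc a x1 ∩ f ⁻¹' (Iic μ) with hT
  have haT : a ∈ T := ⟨⟨le_refl a, hx1.1⟩, hfa⟩
  have hbdd : BddAbove T := ⟨x1, fun y hy => hy.1.2⟩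
  have hsubT : Icc a x1 ⊆ Icc a b := Icc_subset_Icc_right hx1.2
  have hclosed : IsClosed T :=
    (hcontf.mono hsubT).preimage_isClosed_of_isClosed isClosed_Icc isClosed_Iic
  set s := sSup T with hs
  have hsT : s ∈ T := hclosed.csSup_mem ⟨a, haT⟩ hbdd
  have hsx1 : s < x1 := by
    rcases lt_or_eq_of_le hsT.1.2 with h | h
    · exact h
    · exact absurd (h ▸ hsT.2) (not_le.2 hgt)
  have hsge : a ≤ s := hsT.1.1
  have hmid : ∀ y, s < y → y ≤ x1 → μ < f y := by
    intro y hy1 hy2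
    by_contra hy3
    push_neg at hy3
    exact absurd (le_csSup hbdd ⟨⟨hsge.trans hy1.le, hy2⟩, hy3⟩) (not_le.2 hy1)
  have hanti : AntitoneOn f (Icc s x1) := by
    apply antitoneOn_of_deriv_nonpos (convex_Icc s x1)
    · exact hcontf.mono (Icc_subset_Icc hsge hx1.2)
    · intro y hy
      rw [interior_Icc] at hy
      have hyab : y ∈ Icc a b := ⟨hsge.trans hy.1.le, hy.2.le.trans hx1.2⟩
      have : HasDerivAt f (d y) y :=
        (hf y hyab).hasDerivAt (Icc_mem_nhds (hsge.trans_lt hy.1) (hy.2.trans_le hx1.2))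
      exact this.differentiableAt.differentiableWithinAt
    · intro y hy
      rw [interior_Icc] at hy
      have hyab : y ∈ Icc a b := ⟨hsge.trans hy.1.le, hy.2.le.trans hx1.2⟩
      have hdy : HasDerivAt f (d y) y :=
        (hf y hyab).hasDerivAt (Icc_mem_nhds (hsge.trans_lt hy.1) (hy.2.trans_le hx1.2))
      rw [hdy.deriv]
      exact hd y hyab (hmid y hy.1 hy.2.le).le
  have := hanti (left_mem_Icc.2 hsx1.le) (right_mem_Icc.2 hsx1.le) hsx1.le
  exact absurd (this.trans hsT.2) (not_le.2 hgt)

lemma aux_uniq {x0 : ℝ} {F : ℝ → ℝ → ℝ}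
    (hmono : ∀ x, x0 < x → ∀ a b : ℝ, (F x a - F x b) * (a - b) ≤ 0)
    {s : Set ℝ} (hge : ∀ x ∈ s, x0 ≤ x)
    (hsub : ∀ x ∈ s, Icc x0 x ⊆ s)
    (hnb : ∀ x ∈ s, ∀ y ∈ Ioo x0 x, s ∈ 𝓝 y)
    {u v : ℝ → ℝ}
    (hu : ∀ x ∈ s, HasDerivWithinAt u (F x (u x)) s x)
    (hv : ∀ x ∈ s, HasDerivWithinAt v (F x (v x)) s x)
    (hinit : u x0 = v x0) : EqOn u v s := by
  intro x hx
  rcases eq_or_lt_of_le (hge x hx) with h | h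
  · rw [← h]; exact hinit
  have hIccs : Icc x0 x ⊆ s := hsub x hx
  have hcu : ContinuousOn u (Icc x0 x) :=
    fun y hy => ((hu y (hIccs hy)).continuousWithinAt).mono hIccs
  have hcv : ContinuousOn v (Icc x0 x) :=
    fun y hy => ((hv y (hIccs hy)).continuousWithinAt).mono hIccs
  have key : AntitoneOn (fun t => (u t - v t) ^ 2) (Icc x0 x) := by
    apply antitoneOn_of_deriv_nonpos (convex_Icc x0 x)
    · exact (hcu.sub hcv).pow 2
    · intro y hy
      rw [interior_Icc] at hy
      have hys : y ∈ s := hIccs ⟨hy.1.le, hy.2.le⟩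
      have hns : s ∈ 𝓝 y := hnb x hx y hy
      have hdu : HasDerivAt u (F y (u y)) y := (hu y hys).hasDerivAt hns
      have hdv : HasDerivAt v (F y (v y)) y := (hv y hys).hasDerivAt hns
      exact (((hdu.sub hdv).pow 2)).differentiableAt.differentiableWithinAt
    · intro y hy
      rw [interior_Icc] at hy
      have hys : y ∈ s := hIccs ⟨hy.1.le, hy.2.le⟩
      have hns : s ∈ 𝓝 y := hnb x hx y hy
      have hdu : HasDerivAt u (F y (u y)) y := (hu y hys).hasDerivAt hns
      have hdv : HasDerivAt v (F y (v y)) y := (hv y hys).hasDerivAt hns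
      have hD := (hdu.sub hdv).pow 2
      rw [show (fun t => (u t - v t) ^ 2) = (u - v) ^ 2 from rfl, hD.deriv, Pi.sub_apply]
      have := hmono y hy.1 (u y) (v y)
      have he : ((2:ℕ):ℝ) * (u y - v y) ^ (2-1) * (F y (u y) - F y (v y))
          = 2 * ((F y (u y) - F y (v y)) * (u y - v y)) := by
        norm_num; ring
      rw [he]
      linarith
  have h0 : x0 ∈ Icc x0 x := left_mem_Icc.2 h.le
  have hxx : x ∈ Icc x0 x := right_mem_Icc.2 h.le
  have h1 : (u x - v x) ^ 2 ≤ (u x0 - v x0) ^ 2 := key h0 hxx h.le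
  have h2 : (u x0 - v x0) ^ 2 = 0 := by rw [hinit]; ring
  have h3 : (u x - v x) ^ 2 = 0 := le_antisymm (h1.trans h2.le) (sq_nonneg _)
  have := pow_eq_zero_iff (n := 2) (by norm_num) |>.1 h3
  linarith [this]

theorem stmt_15 (x0 u0 α k : ℝ) (hα : 0 < α) (hk : 0 ≤ k)
    (N N' : ℝ → ℝ → ℝ) (φ : ℝ → ℝ)
    (hNcont : ∀ u : ℝ, ContinuousOn (fun x => N x u) (Set.Ici x0))
    (hNlip : LocallyLipschitz (fun p : ℝ × ℝ => N p.1 p.2))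
    (hderiv : ∀ x ∈ Set.Ici x0, ∀ u : ℝ, HasDerivAt (fun v => N x v) (N' x u) u)
    (hdissip : ∀ x ∈ Set.Ici x0, ∀ u : ℝ, N x u + u * N' x u < -α)
    (hφcont : ContinuousOn φ (Set.Ici x0))
    (hφ : ∀ x ∈ Set.Ici x0, |φ x| ≤ k) :
    ∃ u : ℝ → ℝ,
      (u x0 = u0 ∧
        (∀ x ∈ Set.Ici x0, HasDerivWithinAt u (N x (u x) * u x + φ x) (Set.Ici x0) x) ∧
        (∀ x ∈ Set.Ici x0, |u x| ≤ max |u0| (k / α))) ∧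
      ∀ v : ℝ → ℝ, v x0 = u0 →
        (∀ x ∈ Set.Ici x0, HasDerivWithinAt v (N x (v x) * v x + φ x) (Set.Ici x0) x) →
        Set.EqOn v u (Set.Ici x0) := by
  set μ := max |u0| (k / α) with hμdef
  have hμ0 : 0 ≤ μ := le_trans (abs_nonneg u0) (le_max_left _ _)
  have hμu0 : |u0| ≤ μ := le_max_left _ _
  have hμk : k ≤ α * μ := by
    have h1 : k / α ≤ μ := le_max_right _ _
    have h2 : k = α * (k / α) := by field_simp
    rw [h2]
    exact mul_le_mul_of_nonneg_left h1 hα.le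
  -- strict decay of w ↦ N x w * w + α w
  have hantiH : ∀ x ∈ Set.Ici x0, StrictAnti (fun w => N x w * w + α * w) := by
    intro x hx
    apply strictAnti_of_deriv_neg
    intro w
    have h1 : HasDerivAt (fun v => N x v * v) (N' x w * w + N x w * 1) w :=
      (hderiv x hx w).mul (hasDerivAt_id w)
    have h2 : HasDerivAt (fun v => N x v * v + α * v) (N' x w * w + N x w * 1 + α * 1) w :=
      h1.add ((hasDerivAt_id w).const_mul α)
    rw [h2.deriv]
    have h3 := hdissip x hx w
    nlinarith [h3]
  have hantiG : ∀ x ∈ Set.Ici x0, StrictAnti (fun w => N x w * w) := by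
    intro x hx
    apply strictAnti_of_deriv_neg
    intro w
    have h1 : HasDerivAt (fun v => N x v * v) (N' x w * w + N x w * 1) w :=
      (hderiv x hx w).mul (hasDerivAt_id w)
    rw [h1.deriv]
    have h3 := hdissip x hx w
    nlinarith [h3]
  have hup : ∀ x ∈ Set.Ici x0, ∀ w : ℝ, 0 ≤ w → N x w * w + α * w ≤ 0 := by
    intro x hx w hw
    rcases eq_or_lt_of_le hw with h | h
    · rw [← h]; norm_num
    · have := ((hantiH x hx) h).le
      simpa using this
  have hlo : ∀ x ∈ Set.Ici x0, ∀ w : ℝ, w ≤ 0 → 0 ≤ N x w * w + α * w := by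
    intro x hx w hw
    rcases eq_or_lt_of_le hw with h | h
    · rw [h]; norm_num
    · have := ((hantiH x hx) h).le
      simpa using this
  -- monotonicity for uniqueness
  have hmono : ∀ x ∈ Set.Ici x0, ∀ a b : ℝ,
      ((N x a * a + φ x) - (N x b * b + φ x)) * (a - b) ≤ 0 := by
    intro x hx a b
    have he : (N x a * a + φ x) - (N x b * b + φ x) = N x a * a - N x b * b := by ring
    rw [he]
    rcases lt_trichotomy a b with h | h | h
    · have h2 : N x b * b < N x a * a := (hantiG x hx) h
      exact mul_nonpos_iff.2 (Or.inl ⟨by linarith, by linarith⟩)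
    · rw [h]; simp
    · have h2 : N x a * a < N x b * b := (hantiG x hx) h
      exact mul_nonpos_iff.2 (Or.inr ⟨by linarith, by linarith⟩)
  -- existence on each compact interval
  have hexist : ∀ b : ℝ, x0 ≤ b → ∃ f : ℝ → ℝ, f x0 = u0 ∧
      (∀ x ∈ Set.Icc x0 b, HasDerivWithinAt f (N x (f x) * f x + φ x) (Set.Icc x0 b) x) ∧
      (∀ x ∈ Set.Icc x0 b, |f x| ≤ μ) := by
    intro b hb
    set P : ℝ → ℝ := fun w => max (-μ) (min w μ) with hPdef
    have hPmem : ∀ w, P w ∈ Set.Icc (-μ) μ := fun w =>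
      ⟨le_max_left _ _, max_le (neg_le_self hμ0) (min_le_right _ _)⟩
    have hPabs : ∀ w, |P w| ≤ μ := fun w => abs_le.2 ⟨(hPmem w).1, (hPmem w).2⟩
    have hPid : ∀ w, |w| ≤ μ → P w = w := by
      intro w hw
      rw [abs_le] at hw
      rw [hPdef]
      simp only
      rw [min_eq_left hw.2, max_eq_right hw.1]
    have hPhi : ∀ w, μ ≤ w → P w = μ := by
      intro w hw
      rw [hPdef]
      simp only
      rw [min_eq_right hw, max_eq_right (neg_le_self hμ0)]
    have hPlo : ∀ w, w ≤ -μ → P w = -μ := by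
      intro w hw
      rw [hPdef]
      simp only
      rw [min_eq_left (hw.trans (neg_le_self hμ0)), max_eq_left hw]
    have hPlip : ∀ w z : ℝ, |P w - P z| ≤ |w - z| := by
      intro w z
      rw [hPdef]
      simp only
      rw [max_comm (-μ) (min w μ), max_comm (-μ) (min z μ)]
      refine le_trans (abs_max_sub_max_le_abs _ _ _) ?_
      refine le_trans (abs_min_sub_min_le_max w μ z μ) ?_
      simp
    -- compactness data
    have hKcomp : IsCompact ((Set.Icc x0 b) ×ˢ (Set.Icc (-μ) μ)) :=
      isCompact_Icc.prod isCompact_Icc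
    obtain ⟨L, hLnn, hLip⟩ := myLocLip_compact hNlip hKcomp
    have hNc : Continuous (fun p : ℝ × ℝ => N p.1 p.2) := hNlip.continuous
    obtain ⟨M0, hM0⟩ := hKcomp.exists_bound_of_continuousOn hNc.continuousOn
    set M : ℝ := max M0 0 with hMdef
    have hMnn : 0 ≤ M := le_max_right _ _
    have hM : ∀ p ∈ (Set.Icc x0 b) ×ˢ (Set.Icc (-μ) μ), |N p.1 p.2| ≤ M := by
      intro p hp
      exact le_trans (by simpa [Real.norm_eq_abs] using hM0 p hp) (le_max_left _ _)
    set L1 : ℝ := M + L * μ with hL1def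
    have hL1nn : 0 ≤ L1 := add_nonneg hMnn (mul_nonneg hLnn hμ0)
    set Cb : ℝ := M * μ + k with hCbdef
    have hCbnn : 0 ≤ Cb := add_nonneg (mul_nonneg hMnn hμ0) hk
    have hFlip : ∀ x ∈ Set.Icc x0 b, ∀ w z : ℝ,
        |(N x (P w) * P w + φ x) - (N x (P z) * P z + φ x)| ≤ L1 * |w - z| := by
      intro x hx w z
      have hmw : (x, P w) ∈ (Set.Icc x0 b) ×ˢ (Set.Icc (-μ) μ) := ⟨hx, hPmem w⟩
      have hmz : (x, P z) ∈ (Set.Icc x0 b) ×ˢ (Set.Icc (-μ) μ) := ⟨hx, hPmem z⟩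
      have he : (N x (P w) * P w + φ x) - (N x (P z) * P z + φ x)
          = N x (P w) * (P w - P z) + (N x (P w) - N x (P z)) * P z := by ring
      rw [he]
      have h1 : |N x (P w)| ≤ M := hM _ hmw
      have h2 : |N x (P w) - N x (P z)| ≤ L * |P w - P z| := by
        have := hLip _ hmw _ hmz
        rw [Prod.dist_eq, Real.dist_eq, Real.dist_eq, Real.dist_eq] at this
        simpa [abs_nonneg, max_eq_right, sub_self] using this
      have h3 : |P z| ≤ μ := hPabs z
      have h4 := hPlip w z
      calc |N x (P w) * (P w - P z) + (N x (P w) - N x (P z)) * P z|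
          ≤ |N x (P w) * (P w - P z)| + |(N x (P w) - N x (P z)) * P z| := abs_add_le _ _
        _ = |N x (P w)| * |P w - P z| + |N x (P w) - N x (P z)| * |P z| := by
            rw [abs_mul, abs_mul]
        _ ≤ M * |w - z| + (L * |w - z|) * μ := by
            have hb1 : |N x (P w)| * |P w - P z| ≤ M * |w - z| :=
              mul_le_mul h1 h4 (abs_nonneg _) hMnn
            have hb2 : |N x (P w) - N x (P z)| * |P z| ≤ (L * |w - z|) * μ := by
              refine mul_le_mul ?_ h3 (abs_nonneg _) (mul_nonneg hLnn (abs_nonneg _))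
              exact h2.trans (mul_le_mul_of_nonneg_left h4 hLnn)
            linarith
        _ = L1 * |w - z| := by rw [hL1def]; ring
    have hFbd : ∀ x ∈ Set.Icc x0 b, ∀ w : ℝ, |N x (P w) * P w + φ x| ≤ Cb := by
      intro x hx w
      have hmw : (x, P w) ∈ (Set.Icc x0 b) ×ˢ (Set.Icc (-μ) μ) := ⟨hx, hPmem w⟩
      calc |N x (P w) * P w + φ x| ≤ |N x (P w) * P w| + |φ x| := abs_add_le _ _
        _ = |N x (P w)| * |P w| + |φ x| := by rw [abs_mul]
        _ ≤ M * μ + k := by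
            have hb1 : |N x (P w)| * |P w| ≤ M * μ :=
              mul_le_mul (hM _ hmw) (hPabs w) (abs_nonneg _) hMnn
            have hb2 : |φ x| ≤ k := hφ x (mem_of_mem_of_subset hx Icc_subset_Ici_self)
            linarith
    have hPL : IsPicardLindelof (fun x w => N x (P w) * P w + φ x) (tmin := x0) (tmax := b) ⟨x0, le_refl x0, hb⟩ u0
        (Real.toNNReal (Cb * (b - x0))) 0 (Real.toNNReal Cb) (Real.toNNReal L1) := by
      constructor
      · intro τ hτ
        apply LipschitzOnWith.of_dist_le_mul
        intro w _ z _
        rw [Real.dist_eq, Real.dist_eq, Real.coe_toNNReal _ hL1nn]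
        exact hFlip τ hτ w z
      · intro w _
        exact (((hNcont (P w)).mono Icc_subset_Ici_self).mul continuousOn_const).add
          (hφcont.mono Icc_subset_Ici_self)
      · intro τ hτ w _
        rw [Real.norm_eq_abs, Real.coe_toNNReal _ hCbnn]
        exact hFbd τ hτ w
      · have he : max (b - x0) (x0 - x0) = b - x0 := by
          rw [max_eq_left]; linarith
        simp only [NNReal.coe_zero, sub_zero]
        rw [he, Real.coe_toNNReal _ hCbnn, Real.coe_toNNReal _ (mul_nonneg hCbnn (by linarith))]
    obtain ⟨f, hf0, hfd⟩ := hPL.exists_eq_forall_mem_Icc_hasDerivWithinAt₀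
    have hfub : ∀ x ∈ Set.Icc x0 b, f x ≤ μ := by
      apply aux_upper (d := fun x => N x (P (f x)) * P (f x) + φ x)
      · rw [hf0]; exact (le_abs_self u0).trans hμu0
      · exact hfd
      · intro x hx hfx
        rw [hPhi _ hfx]
        have hxI : x ∈ Set.Ici x0 := mem_of_mem_of_subset hx Icc_subset_Ici_self
        have h1 := hup x hxI μ hμ0
        have h2 : φ x ≤ k := (abs_le.1 (hφ x hxI)).2
        linarith
    have hflb : ∀ x ∈ Set.Icc x0 b, -μ ≤ f x := by
      have := aux_upper (f := fun x => -f x)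
        (d := fun x => -(N x (P (f x)) * P (f x) + φ x))
        (a := x0) (b := b) (μ := μ)
        (by show -f x0 ≤ μ; rw [hf0]; exact (neg_le_abs u0).trans hμu0)
        (fun x hx => (hfd x hx).neg)
        (by
          intro x hx hfx
          have hfx' : μ ≤ -f x := hfx
          have hfle : f x ≤ -μ := by linarith
          show -(N x (P (f x)) * P (f x) + φ x) ≤ 0
          rw [hPlo _ hfle]
          have hxI : x ∈ Set.Ici x0 := mem_of_mem_of_subset hx Icc_subset_Ici_self
          have h1 := hlo x hxI (-μ) (neg_nonpos.2 hμ0)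
          have h2 : -k ≤ φ x := (abs_le.1 (hφ x hxI)).1
          have h5 : 0 ≤ N x (-μ) * (-μ) + φ x := by nlinarith
          linarith)
      intro x hx
      have h6 : -f x ≤ μ := this x hx
      linarith
    have hfabs : ∀ x ∈ Set.Icc x0 b, |f x| ≤ μ :=
      fun x hx => abs_le.2 ⟨hflb x hx, hfub x hx⟩
    refine ⟨f, hf0, ?_, hfabs⟩
    intro x hx
    have h1 := hfd x hx
    rwa [hPid _ (hfabs x hx)] at h1
  -- glue solutions
  have hble : ∀ n : ℕ, x0 ≤ x0 + (n : ℝ) := fun n =>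
    le_add_of_nonneg_right (Nat.cast_nonneg n)
  choose Uex hU0 hUd hUb using fun n : ℕ => hexist (x0 + (n : ℝ)) (hble n)
  have hagree : ∀ n m : ℕ, n ≤ m → Set.EqOn (Uex n) (Uex m) (Set.Icc x0 (x0 + (n : ℝ))) := by
    intro n m hnm
    have hsubnm : Set.Icc x0 (x0 + (n : ℝ)) ⊆ Set.Icc x0 (x0 + (m : ℝ)) :=
      Icc_subset_Icc_right (by
        have : (n : ℝ) ≤ (m : ℝ) := Nat.cast_le.2 hnm
        linarith)
    apply aux_uniq (F := fun x w => N x w * w + φ x)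
      (s := Set.Icc x0 (x0 + (n : ℝ)))
      (fun x hx a b => hmono x hx.le a b)
      (fun x hx => hx.1)
      (fun x hx y hy => ⟨hy.1, hy.2.trans hx.2⟩)
      (fun x hx y hy => Icc_mem_nhds hy.1 (hy.2.trans_le hx.2))
      (hUd n)
      (fun x hx => ((hUd m x (hsubnm hx)).mono hsubnm))
      ((hU0 n).trans (hU0 m).symm)
  set u : ℝ → ℝ := fun x => Uex ⌈x - x0⌉₊ x with hudef
  have hu_eq : ∀ m : ℕ, ∀ x ∈ Set.Icc x0 (x0 + (m : ℝ)), u x = Uex m x := by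
    intro m x hx
    have hxn : x ∈ Set.Icc x0 (x0 + (⌈x - x0⌉₊ : ℝ)) :=
      ⟨hx.1, by linarith [Nat.le_ceil (x - x0)]⟩
    rcases le_total ⌈x - x0⌉₊ m with h | h
    · exact hagree _ m h hxn
    · exact (hagree m _ h hx).symm
  have hu0 : u x0 = u0 := by
    have h0 : x0 ∈ Set.Icc x0 (x0 + ((0 : ℕ) : ℝ)) := by simp
    rw [hu_eq 0 x0 h0]
    exact hU0 0
  have hud : ∀ x ∈ Set.Ici x0, HasDerivWithinAt u (N x (u x) * u x + φ x) (Set.Ici x0) x := by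
    intro x hx
    set m : ℕ := ⌈x - x0⌉₊ + 1 with hmdef
    have hxm : x < x0 + (m : ℝ) := by
      have h1 := Nat.le_ceil (x - x0)
      have h2 : ((⌈x - x0⌉₊ : ℕ) : ℝ) + 1 = (m : ℝ) := by rw [hmdef]; push_cast; ring
      linarith
    have hxmem : x ∈ Set.Icc x0 (x0 + (m : ℝ)) := ⟨hx, hxm.le⟩
    have h1 := hUd m x hxmem
    have h2 : HasDerivWithinAt u (N x (Uex m x) * Uex m x + φ x)
        (Set.Icc x0 (x0 + (m : ℝ))) x :=
      h1.congr (fun y hy => hu_eq m y hy) (hu_eq m x hxmem)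
    rw [← hu_eq m x hxmem] at h2
    apply h2.mono_of_mem_nhdsWithin
    rw [← Set.Ici_inter_Iic]
    exact Filter.inter_mem self_mem_nhdsWithin (nhdsWithin_le_nhds (Iic_mem_nhds hxm))
  have hub : ∀ x ∈ Set.Ici x0, |u x| ≤ μ := by
    intro x hx
    have hxn : x ∈ Set.Icc x0 (x0 + (⌈x - x0⌉₊ : ℝ)) :=
      ⟨hx, by linarith [Nat.le_ceil (x - x0)]⟩
    rw [hu_eq _ x hxn]
    exact hUb _ x hxn
  refine ⟨u, ⟨hu0, hud, hub⟩, ?_⟩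
  intro v hv0 hvd
  apply aux_uniq (F := fun x w => N x w * w + φ x)
    (s := Set.Ici x0)
    (fun x hx a b => hmono x hx.le a b)
    (fun x hx => hx)
    (fun x _ y hy => hy.1)
    (fun x _ y hy => Ici_mem_nhds hy.1)
    hvd hud (hv0.trans hu0.symm)
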